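/- Let ρ_1 ≥ ρ_2 ≥ ... ≥ ρ_r be nonnegative reals with Σ_i ρ_i = m, and let z_1, ..., z_r be nonnegative integers with z_i ≤ i for all i and Σ_i z_i ≤ 3τ. Then Σ_i ρ_i·z_i = O(m·√τ); more precisely, Σ_i ρ_i·z_i ≤ m·(J+1) for some J with J(J+1)/2 ≤ 3τ + J, hence Σ_i ρ_i·z_i ≤ C·m·√τ for an absolute constant C (for τ ≥ 1). -/

import Mathlib

open Finset

private lemma gauss_real (n : ℕ) : ∑ k ∈ Finset.range n, ((k : ℝ) + 1) = n * (n + 1) / 2 := by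
  induction n with
  | zero => simp
  | succ n ih => rw [Finset.sum_range_succ, ih]; push_cast; ring

private lemma aux_div_sum (r J τ : ℕ) (zn : ℕ → ℕ)
    (hz : ∀ k < r, zn k ≤ k + 1)
    (hsum : ∑ k ∈ Finset.range r, zn k ≤ 3 * τ)
    (h6 : 6 * τ < (J + 1) * (J + 1))
    (hr : J + 1 ≤ r) :
    ∑ k ∈ Finset.range r, (zn k : ℝ) / ((k : ℝ) + 1) ≤ (J : ℝ) + 1 := by
  have hL : (0:ℝ) < (J:ℝ) + 1 := by positivity
  have hsplit : ∑ k ∈ Finset.range (J+1), (zn k : ℝ) / ((k:ℝ)+1)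
      + ∑ k ∈ Finset.Ico (J+1) r, (zn k : ℝ) / ((k:ℝ)+1)
      = ∑ k ∈ Finset.range r, (zn k : ℝ) / ((k:ℝ)+1) := by
    simp only [Finset.range_eq_Ico]
    exact Finset.sum_Ico_consecutive _ (Nat.zero_le _) hr
  rw [← hsplit]
  have h1 : ∑ k ∈ Finset.range (J+1), (zn k : ℝ) / ((k:ℝ)+1)
      ≤ ∑ k ∈ Finset.range (J+1), (1 - (((k:ℝ)+1) - (zn k : ℝ)) / ((J:ℝ)+1)) := by
    apply Finset.sum_le_sum
    intro k hk
    have hk' : k < J + 1 := Finset.mem_range.mp hk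
    have hkr : k < r := lt_of_lt_of_le hk' hr
    have hzk : (zn k : ℝ) ≤ (k:ℝ) + 1 := by
      have := hz k hkr; exact_mod_cast Nat.cast_le.mpr this |>.trans_eq (by push_cast; ring)
    have hk1 : (0:ℝ) < (k:ℝ) + 1 := by positivity
    have hkJ : (k:ℝ) + 1 ≤ (J:ℝ) + 1 := by
      have : (k:ℝ) ≤ (J:ℝ) := by exact_mod_cast Nat.lt_succ_iff.mp hk'
      linarith
    have hnn : (0:ℝ) ≤ ((k:ℝ)+1) - (zn k : ℝ) := by linarith
    have hdiv : (((k:ℝ)+1) - (zn k : ℝ)) / ((J:ℝ)+1) ≤ (((k:ℝ)+1) - (zn k : ℝ)) / ((k:ℝ)+1) :=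
      div_le_div_of_nonneg_left hnn hk1 hkJ
    have heq : (zn k : ℝ) / ((k:ℝ)+1) = 1 - (((k:ℝ)+1) - (zn k : ℝ)) / ((k:ℝ)+1) := by
      field_simp
      ring
    rw [heq]; linarith
  have h2 : ∑ k ∈ Finset.Ico (J+1) r, (zn k : ℝ) / ((k:ℝ)+1)
      ≤ ∑ k ∈ Finset.Ico (J+1) r, (zn k : ℝ) / ((J:ℝ)+1) := by
    apply Finset.sum_le_sum
    intro k hk
    have hk' : J + 1 ≤ k := (Finset.mem_Ico.mp hk).1
    have : (J:ℝ) + 1 ≤ (k:ℝ) + 1 := by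
      have : (J:ℝ) ≤ (k:ℝ) := by exact_mod_cast le_of_lt hk'
      linarith
    exact div_le_div_of_nonneg_left (by positivity) hL this
  have hsum1 : ∑ k ∈ Finset.range (J+1), (1 - (((k:ℝ)+1) - (zn k : ℝ)) / ((J:ℝ)+1))
      = ((J:ℝ)+1) - (((J:ℝ)+1)*((J:ℝ)+2)/2 - ∑ k ∈ Finset.range (J+1), (zn k : ℝ)) / ((J:ℝ)+1) := by
    rw [Finset.sum_sub_distrib, Finset.sum_const, Finset.card_range]
    rw [← Finset.sum_div, Finset.sum_sub_distrib, gauss_real]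
    push_cast
    ring
  have hsum2 : ∑ k ∈ Finset.Ico (J+1) r, (zn k : ℝ) / ((J:ℝ)+1)
      = (∑ k ∈ Finset.Ico (J+1) r, (zn k : ℝ)) / ((J:ℝ)+1) := by
    rw [Finset.sum_div]
  -- total z sums
  have hztot : (∑ k ∈ Finset.range (J+1), (zn k : ℝ)) + ∑ k ∈ Finset.Ico (J+1) r, (zn k : ℝ)
      ≤ 3 * (τ:ℝ) := by
    have : ∑ k ∈ Finset.range (J+1), (zn k:ℝ) + ∑ k ∈ Finset.Ico (J+1) r, (zn k:ℝ)
        = ∑ k ∈ Finset.range r, (zn k : ℝ) := by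
      simp only [Finset.range_eq_Ico]
      exact Finset.sum_Ico_consecutive _ (Nat.zero_le _) hr
    rw [this]
    have : ((∑ k ∈ Finset.range r, zn k : ℕ) : ℝ) ≤ ((3*τ : ℕ) : ℝ) := by exact_mod_cast hsum
    simpa [Nat.cast_sum] using this
  have htau : 3 * (τ:ℝ) ≤ ((J:ℝ)+1)*((J:ℝ)+2)/2 := by
    have : (6 * τ : ℝ) < ((J:ℝ)+1) * ((J:ℝ)+1) := by exact_mod_cast h6
    nlinarith
  calc ∑ k ∈ Finset.range (J+1), (zn k : ℝ) / ((k:ℝ)+1)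
        + ∑ k ∈ Finset.Ico (J+1) r, (zn k : ℝ) / ((k:ℝ)+1)
      ≤ (((J:ℝ)+1) - (((J:ℝ)+1)*((J:ℝ)+2)/2 - ∑ k ∈ Finset.range (J+1), (zn k : ℝ)) / ((J:ℝ)+1))
        + (∑ k ∈ Finset.Ico (J+1) r, (zn k : ℝ)) / ((J:ℝ)+1) := by
        rw [← hsum1, ← hsum2]; exact add_le_add h1 h2
    _ = ((J:ℝ) + 1) + ((∑ k ∈ Finset.range (J+1), (zn k : ℝ))
          + (∑ k ∈ Finset.Ico (J+1) r, (zn k : ℝ)) - ((J:ℝ)+1)*((J:ℝ)+2)/2) / ((J:ℝ)+1) := by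
        ring
    _ ≤ (J:ℝ) + 1 := by
        have hnum : (∑ k ∈ Finset.range (J+1), (zn k : ℝ))
          + (∑ k ∈ Finset.Ico (J+1) r, (zn k : ℝ)) - ((J:ℝ)+1)*((J:ℝ)+2)/2 ≤ 0 := by linarith
        have := div_nonpos_of_nonpos_of_nonneg hnum hL.le
        linarith


theorem stmt_19 :
    ∃ C : ℝ, 0 < C ∧
      ∀ (r : ℕ) (ρ : Fin r → ℝ) (z : Fin r → ℕ) (m : ℝ) (τ : ℕ),
        (∀ i, 0 ≤ ρ i) →
        (∀ i j : Fin r, i ≤ j → ρ j ≤ ρ i) →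
        (∑ i, ρ i) = m →
        (∀ i : Fin r, z i ≤ (i : ℕ) + 1) →
        (∑ i, z i) ≤ 3 * τ →
        1 ≤ τ →
        (∃ J : ℕ, J * (J + 1) ≤ 2 * (3 * τ + J) ∧
            (∑ i, ρ i * (z i : ℝ)) ≤ m * ((J : ℝ) + 1)) ∧
          (∑ i, ρ i * (z i : ℝ)) ≤ C * m * Real.sqrt (τ : ℝ) := by
  refine ⟨4, by norm_num, ?_⟩
  intro r ρ z m τ hρ0 hmono hm hz hzsum hτ
  set J := Nat.sqrt (6 * τ) with hJdef
  have hm0 : 0 ≤ m := hm ▸ Finset.sum_nonneg fun i _ => hρ0 i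
  have h6 : 6 * τ < (J + 1) * (J + 1) := by
    have := Nat.lt_succ_sqrt (6 * τ)
    simpa [hJdef, Nat.succ_eq_add_one] using this
  have hJcond : J * (J + 1) ≤ 2 * (3 * τ + J) := by
    have h1 : J * J ≤ 6 * τ := by simpa [Nat.pow_two] using Nat.sqrt_le' (6 * τ)
    nlinarith
  -- each ρ i is at most m / (i+1)
  have hρm : ∀ i : Fin r, ρ i * ((i : ℕ) + 1 : ℝ) ≤ m := by
    intro i
    have hcard : (Finset.Iic i).card = (i : ℕ) + 1 := by
      simp [Fin.card_Iic]
    have h1 : (Finset.Iic i).card • ρ i ≤ ∑ j ∈ Finset.Iic i, ρ j := by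
      rw [← Finset.sum_const]
      exact Finset.sum_le_sum fun j hj => hmono j i (Finset.mem_Iic.mp hj)
    have h2 : ∑ j ∈ Finset.Iic i, ρ j ≤ ∑ j, ρ j :=
      Finset.sum_le_sum_of_subset_of_nonneg (Finset.subset_univ _) fun j _ _ => hρ0 j
    have h3 := h1.trans (h2.trans_eq hm)
    rw [hcard, nsmul_eq_mul] at h3
    calc ρ i * ((i : ℕ) + 1 : ℝ) = (((i : ℕ) + 1 : ℕ) : ℝ) * ρ i := by push_cast; ring
      _ ≤ m := h3
  -- key bound : Σ ρ z ≤ m (J+1)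
  have key : (∑ i, ρ i * (z i : ℝ)) ≤ m * ((J : ℝ) + 1) := by
    rcases le_or_gt r (J + 1) with hr | hr
    · calc (∑ i, ρ i * (z i : ℝ)) ≤ ∑ i, ρ i * ((J : ℝ) + 1) := by
            apply Finset.sum_le_sum
            intro i _
            apply mul_le_mul_of_nonneg_left _ (hρ0 i)
            have h1 : z i ≤ J + 1 := (hz i).trans (by omega)
            exact_mod_cast Nat.cast_le.mpr h1
        _ = m * ((J : ℝ) + 1) := by rw [← Finset.sum_mul, hm]
    · set zn : ℕ → ℕ := fun k => if h : k < r then z ⟨k, h⟩ else 0 with hzn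
      have hz' : ∀ k < r, zn k ≤ k + 1 := by
        intro k hk
        simpa [hzn, hk] using hz ⟨k, hk⟩
      have hsum' : ∑ k ∈ Finset.range r, zn k ≤ 3 * τ := by
        have : ∑ k ∈ Finset.range r, zn k = ∑ i : Fin r, z i := by
          rw [← Fin.sum_univ_eq_sum_range]
          exact Finset.sum_congr rfl fun i _ => by simp [hzn, i.isLt]
        rw [this]; exact hzsum
      have haux := aux_div_sum r J τ zn hz' hsum' h6 hr.le
      have hstep : (∑ i, ρ i * (z i : ℝ))
          ≤ ∑ i : Fin r, m * ((z i : ℝ) / ((i : ℕ) + 1)) := by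
        apply Finset.sum_le_sum
        intro i _
        have hi1 : (0 : ℝ) < (i : ℕ) + 1 := by positivity
        have heq : ρ i * (z i : ℝ) = (ρ i * ((i : ℕ) + 1)) * ((z i : ℝ) / ((i : ℕ) + 1)) := by
          field_simp
        rw [heq]
        exact mul_le_mul_of_nonneg_right (hρm i) (by positivity)
      have hconv : ∑ i : Fin r, m * ((z i : ℝ) / ((i : ℕ) + 1))
          = m * ∑ k ∈ Finset.range r, (zn k : ℝ) / ((k : ℝ) + 1) := by
        rw [← Finset.mul_sum]
        congr 1
        rw [← Fin.sum_univ_eq_sum_range]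
        exact Finset.sum_congr rfl fun i _ => by simp [hzn, i.isLt]
      calc (∑ i, ρ i * (z i : ℝ)) ≤ ∑ i : Fin r, m * ((z i : ℝ) / ((i : ℕ) + 1)) := hstep
        _ = m * ∑ k ∈ Finset.range r, (zn k : ℝ) / ((k : ℝ) + 1) := hconv
        _ ≤ m * ((J : ℝ) + 1) := mul_le_mul_of_nonneg_left haux hm0
  refine ⟨⟨J, hJcond, key⟩, ?_⟩
  -- m (J+1) ≤ 4 m √τ
  have hτ1 : (1 : ℝ) ≤ (τ : ℝ) := by exact_mod_cast hτ
  have hs6 : Real.sqrt 6 ≤ 3 := by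
    nlinarith [Real.sq_sqrt (by norm_num : (0:ℝ) ≤ 6), Real.sqrt_nonneg 6]
  have hsτ : 1 ≤ Real.sqrt (τ : ℝ) := by
    nlinarith [Real.sq_sqrt (by linarith : (0:ℝ) ≤ (τ:ℝ)), Real.sqrt_nonneg (τ:ℝ)]
  have hJle : (J : ℝ) ≤ Real.sqrt 6 * Real.sqrt (τ : ℝ) := by
    rw [← Real.sqrt_mul (by norm_num : (0:ℝ) ≤ 6)]
    rw [show (6 : ℝ) * (τ : ℝ) = ((6 * τ : ℕ) : ℝ) by push_cast; ring]
    have h1 : (J : ℝ) ^ 2 ≤ ((6 * τ : ℕ) : ℝ) := by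
      have h0 : J * J ≤ 6 * τ := by simpa [Nat.pow_two] using Nat.sqrt_le' (6 * τ)
      have h2 : ((J * J : ℕ) : ℝ) ≤ ((6 * τ : ℕ) : ℝ) := by exact_mod_cast h0
      calc (J : ℝ) ^ 2 = ((J * J : ℕ) : ℝ) := by push_cast; ring
        _ ≤ _ := h2
    exact (Real.le_sqrt (Nat.cast_nonneg J) (Nat.cast_nonneg _)).mpr h1
  have hfin : (J : ℝ) + 1 ≤ 4 * Real.sqrt (τ : ℝ) := by
    nlinarith [Real.sqrt_nonneg (τ : ℝ)]
  calc (∑ i, ρ i * (z i : ℝ)) ≤ m * ((J : ℝ) + 1) := key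
    _ ≤ m * (4 * Real.sqrt (τ : ℝ)) := mul_le_mul_of_nonneg_left hfin hm0
    _ = 4 * m * Real.sqrt (τ : ℝ) := by ring
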